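/- Assume in addition that L_0 is differentiable on [0,∞) with L_0'(0) = −1/λ for some λ > 0, and that each L_k (k ≥ 0) is convex on [0,∞) (as holds for Laplace–Stieltjes transforms). If μ_n / p_n → 0 as n → ∞, then ℓ_n → 1. -/

import Mathlib

open Filter

/-- The recursively defined overflow Laplace–Stieltjes transforms:
`ovLST L0 ms 0 = L0` and
`ovLST L0 ms n s = L_{n-1}(μ_n + s) / (1 - L_{n-1}(s) + L_{n-1}(μ_n + s))`. -/
noncomputable def ovLST (L0 : ℝ → ℝ) (ms : ℕ → ℝ) : ℕ → ℝ → ℝ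
  | 0 => L0
  | n + 1 => fun s =>
      ovLST L0 ms n (ms (n + 1) + s) /
        (1 - ovLST L0 ms n s + ovLST L0 ms n (ms (n + 1) + s))

/-- The blocking probability of the first `n` servers: `p_n = ∏_{i=1}^n L_{i-1}(μ_i)`. -/
noncomputable def blockP (L0 : ℝ → ℝ) (ms : ℕ → ℝ) (n : ℕ) : ℝ :=
  ∏ i ∈ Finset.Icc 1 n, ovLST L0 ms (i - 1) (ms i)

lemma convex_tangent_le {g : ℝ → ℝ} {a s : ℝ} (hg : ConvexOn ℝ (Set.Ici 0) g)
    (hd : HasDerivWithinAt g a (Set.Ici 0) 0) (hs : 0 < s) :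
    g 0 + a * s ≤ g s := by
  have h1 : Tendsto (slope g 0) (nhdsWithin 0 (Set.Ioi 0)) (nhds a) := by
    have h := hasDerivWithinAt_iff_tendsto_slope.mp hd
    rwa [show Set.Ici (0:ℝ) \ {0} = Set.Ioi 0 by
      ext x; simp [Set.mem_Ici, Set.mem_Ioi, lt_iff_le_and_ne, eq_comm]] at h
  have h2 : a ≤ slope g 0 s := by
    refine le_of_tendsto h1 ?_
    filter_upwards [Ioo_mem_nhdsGT_of_mem ⟨le_refl 0, hs⟩] with t ht
    have := hg.secant_mono (Set.self_mem_Ici) (Set.mem_Ici.mpr ht.1.le)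
      (Set.mem_Ici.mpr hs.le) ht.1.ne' hs.ne' ht.2.le
    simpa [slope_def_field] using this
  rw [slope_def_field, sub_zero] at h2
  have := (le_div_iff₀ hs).mp h2
  linarith

lemma blockP_succ (L0 : ℝ → ℝ) (ms : ℕ → ℝ) (n : ℕ) :
    blockP L0 ms (n + 1) = blockP L0 ms n * ovLST L0 ms n (ms (n + 1)) := by
  unfold blockP
  rw [Finset.prod_Icc_succ_top (Nat.succ_le_succ (Nat.zero_le n))]
  simp

lemma ovLST_props (ms : ℕ → ℝ) (hms : ∀ n, 1 ≤ n → 0 < ms n)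
    (L0 : ℝ → ℝ) (hL00 : L0 0 = 1) (hL0pos : ∀ s, 0 ≤ s → 0 < L0 s)
    (hL0anti : AntitoneOn L0 (Set.Ici 0))
    (lam : ℝ) (hlam : 0 < lam)
    (hdiff : DifferentiableOn ℝ L0 (Set.Ici 0))
    (hder : HasDerivWithinAt L0 (-(1 / lam)) (Set.Ici 0) 0) :
    ∀ n, ovLST L0 ms n 0 = 1 ∧ (∀ s, 0 ≤ s → 0 < ovLST L0 ms n s) ∧
      AntitoneOn (ovLST L0 ms n) (Set.Ici 0) ∧
      DifferentiableOn ℝ (ovLST L0 ms n) (Set.Ici 0) ∧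
      0 < blockP L0 ms n ∧
      HasDerivWithinAt (ovLST L0 ms n) (-(1 / (lam * blockP L0 ms n))) (Set.Ici 0) 0 := by
  intro n
  induction n with
  | zero =>
      refine ⟨hL00, hL0pos, hL0anti, hdiff, ?_, ?_⟩
      · simp [blockP]
      · simpa [blockP, ovLST] using hder
  | succ n ih =>
      obtain ⟨h1, h2, h3, h4, h5, h6⟩ := ih
      set f := ovLST L0 ms n with hf
      set μ' := ms (n + 1) with hμ'def
      have hμ' : 0 < μ' := hms (n + 1) (Nat.succ_le_succ (Nat.zero_le n))
      have hfle : ∀ s, 0 ≤ s → f s ≤ 1 := by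
        intro s hs
        have := h3 (Set.self_mem_Ici) (Set.mem_Ici.mpr hs) hs
        rwa [h1] at this
      have hD : ∀ s, 0 ≤ s → 0 < 1 - f s + f (μ' + s) := by
        intro s hs
        have hA : 0 < f (μ' + s) := h2 _ (by linarith)
        have := hfle s hs
        linarith
      have hgdef : ovLST L0 ms (n + 1) =
          fun s => f (μ' + s) / (1 - f s + f (μ' + s)) := rfl
      have hℓpos : 0 < f μ' := h2 μ' hμ'.le
      have hg0 : ovLST L0 ms (n + 1) 0 = 1 := by
        rw [hgdef]
        simp only [add_zero, h1]
        rw [show (1 : ℝ) - 1 + f μ' = f μ' by ring, div_self hℓpos.ne']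
      have hgpos : ∀ s, 0 ≤ s → 0 < ovLST L0 ms (n + 1) s := by
        intro s hs
        rw [hgdef]
        exact div_pos (h2 _ (by linarith)) (hD s hs)
      have hganti : AntitoneOn (ovLST L0 ms (n + 1)) (Set.Ici 0) := by
        intro a ha b hb hab
        rw [Set.mem_Ici] at ha hb
        rw [hgdef]
        dsimp only
        rw [div_le_div_iff₀ (hD b hb) (hD a ha)]
        have hAb : 0 < f (μ' + b) := h2 _ (by linarith)
        have hAab : f (μ' + b) ≤ f (μ' + a) :=
          h3 (Set.mem_Ici.mpr (by linarith)) (Set.mem_Ici.mpr (by linarith)) (by linarith)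
        have hfab : f b ≤ f a := h3 (Set.mem_Ici.mpr ha) (Set.mem_Ici.mpr hb) hab
        have hfa1 : f a ≤ 1 := hfle a ha
        nlinarith [mul_le_mul hAab (by linarith : 1 - f a ≤ 1 - f b)
          (by linarith : (0:ℝ) ≤ 1 - f a) (le_trans hAb.le hAab)]
      have hmaps : Set.MapsTo (fun s => μ' + s) (Set.Ici (0:ℝ)) (Set.Ici (0:ℝ)) :=
        fun s hs => Set.mem_Ici.mpr (add_nonneg hμ'.le (Set.mem_Ici.mp hs))
      have hcompdiff : DifferentiableOn ℝ (fun s => f (μ' + s)) (Set.Ici 0) :=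
        DifferentiableOn.comp h4 ((differentiable_id.const_add μ').differentiableOn) hmaps
      have hDdiff : DifferentiableOn ℝ (fun s => 1 - f s + f (μ' + s)) (Set.Ici 0) :=
        ((differentiableOn_const 1).sub h4).add hcompdiff
      have hgdiff : DifferentiableOn ℝ (ovLST L0 ms (n + 1)) (Set.Ici 0) := by
        rw [hgdef]
        exact hcompdiff.div hDdiff (fun s hs => (hD s (Set.mem_Ici.mp hs)).ne')
      have hPsucc : blockP L0 ms (n + 1) = blockP L0 ms n * f μ' := blockP_succ L0 ms n
      have hP1pos : 0 < blockP L0 ms (n + 1) := by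
        rw [hPsucc]; exact mul_pos h5 hℓpos
      refine ⟨hg0, hgpos, hganti, hgdiff, hP1pos, ?_⟩
      -- derivative computation
      set d := derivWithin f (Set.Ici 0) μ' with hddef
      have hd' : HasDerivWithinAt f d (Set.Ici 0) μ' :=
        (h4 μ' (Set.mem_Ici.mpr hμ'.le)).hasDerivWithinAt
      have hinner : HasDerivWithinAt (fun s : ℝ => μ' + s) 1 (Set.Ici 0) 0 :=
        (hasDerivWithinAt_id 0 _).const_add μ'
      have hcomp0 : HasDerivWithinAt (fun s => f (μ' + s)) (d * 1) (Set.Ici 0) 0 :=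
        HasDerivWithinAt.comp 0 (by simpa using hd') hinner hmaps
      have hDder : HasDerivWithinAt (fun s => 1 - f s + f (μ' + s))
          (0 - -(1 / (lam * blockP L0 ms n)) + d * 1) (Set.Ici 0) 0 :=
        ((hasDerivWithinAt_const 0 (Set.Ici (0:ℝ)) 1).sub h6).add hcomp0
      have hq := hcomp0.div hDder (hD 0 le_rfl).ne'
      rw [hgdef]
      convert hq using 1
      · rfl
      · rfl
      · rfl
      have h10 : f (μ' + 0) = f μ' := by rw [add_zero]
      rw [h10, h1, hPsucc]
      have hP : blockP L0 ms n ≠ 0 := h5.ne'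
      have hℓ : f μ' ≠ 0 := hℓpos.ne'
      field_simp
      ring

theorem stmt_10
    (μ : ℝ) (hμ : 0 < μ) (ms : ℕ → ℝ)
    (hms : ∀ n, 1 ≤ n → 0 < ms n)
    (hsum : HasSum (fun n => ms (n + 1)) μ)
    (L0 : ℝ → ℝ) (hL00 : L0 0 = 1)
    (hL0pos : ∀ s, 0 ≤ s → 0 < L0 s)
    (hL0anti : StrictAntiOn L0 (Set.Ici 0))
    (hL0lim : Tendsto L0 atTop (nhds 0))
    (lam : ℝ) (hlam : 0 < lam)
    (hdiff : DifferentiableOn ℝ L0 (Set.Ici 0))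
    (hder : HasDerivWithinAt L0 (-(1 / lam)) (Set.Ici 0) 0)
    (hconv : ∀ k : ℕ, ConvexOn ℝ (Set.Ici (0 : ℝ)) (ovLST L0 ms k))
    (hratio : Tendsto (fun n => ms (n + 1) / blockP L0 ms (n + 1)) atTop (nhds 0)) :
    Tendsto (fun n => ovLST L0 ms n (ms (n + 1))) atTop (nhds 1) := by
  have key := ovLST_props ms hms L0 hL00 hL0pos hL0anti.antitoneOn lam hlam hdiff hder
  have hlow : ∀ n, 1 - (1 / lam) * (ms (n + 1) / blockP L0 ms (n + 1)) ≤
      ovLST L0 ms n (ms (n + 1)) := by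
    intro n
    obtain ⟨h1, h2, h3, h4, h5, h6⟩ := key n
    have hμ' : 0 < ms (n + 1) := hms (n + 1) (Nat.succ_le_succ (Nat.zero_le n))
    have htan := convex_tangent_le (hconv n) h6 hμ'
    rw [h1] at htan
    -- htan : 1 + -(1 / (lam * blockP L0 ms n)) * ms (n+1) ≤ ovLST L0 ms n (ms (n+1))
    have hℓle : ovLST L0 ms n (ms (n + 1)) ≤ 1 := by
      have := h3 Set.self_mem_Ici (Set.mem_Ici.mpr hμ'.le) hμ'.le
      rwa [h1] at this
    have hP1pos : 0 < blockP L0 ms (n + 1) := (key (n + 1)).2.2.2.2.1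
    have hPsucc : blockP L0 ms (n + 1) = blockP L0 ms n *
        ovLST L0 ms n (ms (n + 1)) := blockP_succ L0 ms n
    have hPle : blockP L0 ms (n + 1) ≤ blockP L0 ms n := by
      rw [hPsucc]
      nlinarith
    have hstep : (1 / lam) * (ms (n + 1) / blockP L0 ms n) ≤
        (1 / lam) * (ms (n + 1) / blockP L0 ms (n + 1)) := by
      have : ms (n + 1) / blockP L0 ms n ≤ ms (n + 1) / blockP L0 ms (n + 1) :=
        div_le_div_of_nonneg_left hμ'.le hP1pos hPle
      exact mul_le_mul_of_nonneg_left this (by positivity)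
    have heq : -(1 / (lam * blockP L0 ms n)) * ms (n + 1) =
        -((1 / lam) * (ms (n + 1) / blockP L0 ms n)) := by
      field_simp
    rw [heq] at htan
    linarith
  have hup : ∀ n, ovLST L0 ms n (ms (n + 1)) ≤ 1 := by
    intro n
    obtain ⟨h1, h2, h3, h4, h5, h6⟩ := key n
    have hμ' : 0 < ms (n + 1) := hms (n + 1) (Nat.succ_le_succ (Nat.zero_le n))
    have := h3 Set.self_mem_Ici (Set.mem_Ici.mpr hμ'.le) hμ'.le
    rwa [h1] at this
  have hlowlim : Tendsto (fun n => 1 - (1 / lam) * (ms (n + 1) / blockP L0 ms (n + 1)))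
      atTop (nhds 1) := by
    have h0 : Tendsto (fun n : ℕ => (1 / lam) * (ms (n + 1) / blockP L0 ms (n + 1)))
        atTop (nhds ((1 / lam) * 0)) := hratio.const_mul (1 / lam)
    have h1 := (tendsto_const_nhds : Tendsto (fun _ : ℕ => (1:ℝ)) atTop (nhds 1)).sub h0
    simpa using h1
  exact tendsto_of_tendsto_of_tendsto_of_le_of_le hlowlim tendsto_const_nhds hlow hup
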